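/- (Gelfond's exponential sum estimate) There is a constant C such that for all real α and all X > 2, |∑_{1 ≤ n ≤ X} ε(n) e(αn)| ≤ C X^λ, where λ = log 3 / log 4. -/

import Mathlib

open Complex Finset

/-- `e(x) = exp(2πix)`. -/
noncomputable def e (x : ℝ) : ℂ := Complex.exp (2 * Real.pi * Complex.I * x)

/-- `ε(n) = (-1)^(s₂ n)` where `s₂` is the binary digit sum. -/
def eps (n : ℕ) : ℤ := (-1) ^ ((Nat.digits 2 n).sum)

lemma e_add (x y : ℝ) : e (x + y) = e x * e y := by
  unfold e
  rw [← Complex.exp_add]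
  push_cast
  ring_nf

lemma abs_e (x : ℝ) : ‖e x‖ = 1 := by
  unfold e
  rw [show 2 * (Real.pi:ℂ) * Complex.I * (x:ℝ) = ((2 * Real.pi * x : ℝ) : ℂ) * Complex.I by push_cast; ring]
  exact Complex.norm_exp_ofReal_mul_I _

lemma abs_one_sub_e (x : ℝ) : ‖1 - e x‖ = 2 * |Real.sin (Real.pi * x)| := by
  unfold e
  rw [show 2 * (Real.pi:ℂ) * Complex.I * (x:ℝ) = ((2 * Real.pi * x : ℝ) : ℂ) * Complex.I by push_cast; ring]
  rw [Complex.exp_mul_I]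
  rw [show (1:ℂ) - (Complex.cos (2*Real.pi*x:ℝ) + Complex.sin (2*Real.pi*x:ℝ) * Complex.I)
      = Complex.ofReal (1 - Real.cos (2*Real.pi*x)) + Complex.ofReal (- Real.sin (2*Real.pi*x)) * Complex.I by
    push_cast [Complex.ofReal_cos, Complex.ofReal_sin]; ring]
  rw [Complex.norm_def, Complex.normSq_add_mul_I]
  have h1 : (1 - Real.cos (2*Real.pi*x))^2 + (-Real.sin (2*Real.pi*x))^2 = (2*|Real.sin (Real.pi*x)|)^2 := by
    have hc : Real.cos (2*Real.pi*x) = 1 - 2 * Real.sin (Real.pi*x)^2 := by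
      rw [show 2*Real.pi*x = 2*(Real.pi*x) by ring, Real.cos_two_mul]
      nlinarith [Real.sin_sq_add_cos_sq (Real.pi*x)]
    have hs := Real.sin_sq_add_cos_sq (2*Real.pi*x)
    rw [hc]
    have : |Real.sin (Real.pi*x)|^2 = Real.sin (Real.pi*x)^2 := _root_.sq_abs _
    nlinarith [hs]
  rw [h1, Real.sqrt_sq (by positivity)]

lemma eps_zero : eps 0 = 1 := by unfold eps; simp

lemma eps_two_mul (m : ℕ) : eps (2*m) = eps m := by
  rcases Nat.eq_zero_or_pos m with h | h
  · subst h; rfl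
  · unfold eps
    rw [Nat.digits_def' (by norm_num : 1 < 2) (by omega : 0 < 2*m)]
    have h1 : (2*m) % 2 = 0 := by omega
    have h2 : (2*m) / 2 = m := by omega
    rw [h1, h2]
    simp

lemma eps_two_mul_add_one (m : ℕ) : eps (2*m+1) = - eps m := by
  unfold eps
  rw [Nat.digits_def' (by norm_num : 1 < 2) (by omega : 0 < 2*m+1)]
  have h1 : (2*m+1) % 2 = 1 := by omega
  have h2 : (2*m+1) / 2 = m := by omega
  rw [h1, h2]
  simp [pow_succ]
  ring

noncomputable def Sg (N : ℕ) (α : ℝ) : ℂ := ∑ n ∈ Finset.range N, (eps n : ℂ) * e (α * n)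

lemma e_congr {x y : ℝ} (h : x = y) : e x = e y := by rw [h]

lemma Sg_two_mul (M : ℕ) (α : ℝ) : Sg (2*M) α = (1 - e α) * Sg M (2*α) := by
  induction M with
  | zero => simp [Sg]
  | succ M ih =>
    have h2 : 2*(M+1) = (2*M + 1) + 1 := by ring
    rw [h2]
    unfold Sg
    rw [Finset.sum_range_succ, Finset.sum_range_succ]
    unfold Sg at ih
    rw [ih]
    rw [Finset.sum_range_succ]
    have hev : ((eps (2*M) : ℂ)) * e (α * (2*M : ℕ)) = (eps M : ℂ) * e (2*α*M) := by
      rw [eps_two_mul]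
      congr 1
      apply e_congr
      push_cast; ring
    have hod : ((eps (2*M+1) : ℂ)) * e (α * ((2*M+1 : ℕ) : ℕ)) = -((eps M : ℂ) * e (2*α*M) * e α) := by
      rw [eps_two_mul_add_one]
      push_cast
      rw [show α * (2*(M:ℝ)+1) = 2*α*M + α by ring, e_add]
      ring
    rw [hev, hod]
    ring

lemma abs_eps (n : ℕ) : ‖(eps n : ℂ)‖ = 1 := by
  unfold eps
  push_cast
  rw [norm_pow]
  simp

lemma Sg_rec (N : ℕ) (α : ℝ) :
    ‖Sg N α‖ ≤ ‖1 - e α‖ * ‖Sg (N/2) (2*α)‖ + 1 := by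
  rcases Nat.even_or_odd N with ⟨M, hM⟩ | ⟨M, hM⟩
  · have h : N = 2*M := by omega
    subst h
    rw [Nat.mul_div_cancel_left _ (by norm_num : 0 < 2), Sg_two_mul, norm_mul]
    linarith [norm_nonneg (Sg M (2*α))]
  · subst hM
    have h : (2*M+1)/2 = M := by omega
    rw [h]
    have hsum : Sg (2*M+1) α = Sg (2*M) α + (eps (2*M) : ℂ) * e (α * (2*M : ℕ)) := by
      unfold Sg; rw [Finset.sum_range_succ]
    rw [hsum, Sg_two_mul]
    refine le_trans (norm_add_le _ _) ?_
    have h1 : ‖(eps (2*M):ℂ) * e (α * (2*M:ℕ))‖ = 1 := by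
      rw [norm_mul, abs_eps, abs_e, mul_one]
    rw [h1, norm_mul]

lemma polyA1 (x : ℝ) (h0 : 0 ≤ x) (h1 : x ≤ 1/4) : 4*x*(1-x)^2 ≤ 9/16 := by
  nlinarith [sq_nonneg (x - 1/4), sq_nonneg x, mul_nonneg h0 h0]

lemma polyA2 (x : ℝ) (h0 : 1/2 ≤ x) (h1 : x ≤ 1) : 4*x*(1-x)^2 ≤ 9/16 := by
  nlinarith [sq_nonneg (x - 1/2), mul_nonneg (sub_nonneg.2 h0) (sub_nonneg.2 h1), sq_nonneg (1-x)]

lemma polyB (x : ℝ) (h0 : 1/4 ≤ x) (h1 : x ≤ 1/2) :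
    64*x^2*(1-x)^3*(2*x-1)^2 ≤ 27/64 := by
  nlinarith [sq_nonneg (x-1/4), sq_nonneg (2*x-1), mul_nonneg (sub_nonneg.2 h0) (sub_nonneg.2 h1),
    sq_nonneg (x*(1-x)), mul_nonneg (mul_nonneg (sub_nonneg.2 h0) (sub_nonneg.2 h1)) (sq_nonneg (2*x-1)),
    sq_nonneg ((x-1/4)*(2*x-1))]

lemma key_ineq (t : ℝ) :
    2*|Real.sin t| * (2*|Real.sin (2*t)|) ≤ 3 ∨
    2*|Real.sin t| * (2*|Real.sin (2*t)|) * (2*|Real.sin (4*t)|) ≤ 3 * Real.sqrt 3 := by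
  have hx0 : (0:ℝ) ≤ Real.cos t ^ 2 := sq_nonneg _
  have hsin2 : Real.sin t ^ 2 = 1 - Real.cos t ^ 2 := by
    have := Real.sin_sq_add_cos_sq t; linarith
  have hx1 : Real.cos t ^ 2 ≤ 1 := by nlinarith [sq_nonneg (Real.sin t)]
  have hs2 : Real.sin (2*t) = 2 * Real.sin t * Real.cos t := Real.sin_two_mul t
  have hs4 : Real.sin (4*t) = 2 * Real.sin (2*t) * Real.cos (2*t) := by
    rw [show (4:ℝ)*t = 2*(2*t) by ring, Real.sin_two_mul]
  have hc2 : Real.cos (2*t) = 2*Real.cos t^2 - 1 := Real.cos_two_mul t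
  have ha : (|Real.sin t| * |Real.sin (2*t)|)^2 = 4*(Real.cos t^2)*(1-Real.cos t^2)^2 := by
    rw [mul_pow, _root_.sq_abs, _root_.sq_abs, hs2]
    linear_combination (4*Real.cos t^2*(Real.sin t^2 + 1 - Real.cos t^2)) * hsin2
  have hb : (|Real.sin t| * |Real.sin (2*t)| * |Real.sin (4*t)|)^2
      = 64*(Real.cos t^2)^2*(1-Real.cos t^2)^3*(2*Real.cos t^2-1)^2 := by
    rw [mul_pow, mul_pow, _root_.sq_abs, _root_.sq_abs, _root_.sq_abs, hs4, hc2, hs2]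
    linear_combination (64*Real.cos t^4*(2*Real.cos t^2-1)^2*(Real.sin t^4 + Real.sin t^2*(1-Real.cos t^2)+(1-Real.cos t^2)^2)) * hsin2
  have habs0 : (0:ℝ) ≤ |Real.sin t| * |Real.sin (2*t)| := by positivity
  rcases le_or_gt (Real.cos t^2) (1/4) with hx | hx
  · left
    have h := polyA1 _ hx0 hx
    nlinarith [ha, habs0]
  rcases le_or_gt (1/2) (Real.cos t^2) with hx' | hx'
  · left
    have h := polyA2 _ hx' hx1
    nlinarith [ha, habs0]
  · right
    have h := polyB _ (le_of_lt hx) (le_of_lt hx')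
    have habs0' : (0:ℝ) ≤ |Real.sin t| * |Real.sin (2*t)| * |Real.sin (4*t)| := by positivity
    have h3 : Real.sqrt 3 ^ 2 = 3 := Real.sq_sqrt (by norm_num)
    have h3' : (0:ℝ) ≤ Real.sqrt 3 := Real.sqrt_nonneg 3
    nlinarith [hb, habs0', h3, h3']

noncomputable def F (i : ℕ) (t : ℝ) : ℝ := ∏ j ∈ Finset.range i, 2 * |Real.sin (2^j * t)|

lemma F_nonneg (i : ℕ) (t : ℝ) : 0 ≤ F i t :=
  Finset.prod_nonneg fun j _ => by positivity

lemma F_succ (i : ℕ) (t : ℝ) : F (i+1) t = 2 * |Real.sin t| * F i (2*t) := by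
  unfold F
  rw [Finset.prod_range_succ']
  have h : ∀ j, 2 * |Real.sin (2^(j+1) * t)| = 2 * |Real.sin (2^j * (2*t))| := by
    intro j; congr 2; ring
  rw [Finset.prod_congr rfl (fun j _ => h j)]
  simp [mul_comm]

lemma Sg_bound : ∀ k N α, N < 2^k → ‖Sg N α‖ ≤ ∑ i ∈ Finset.range k, F i (Real.pi * α) := by
  intro k
  induction k with
  | zero => intro N α h; interval_cases N; simp [Sg]
  | succ k ih =>
    intro N α h
    have hN2 : N / 2 < 2^k := by
      rw [pow_succ] at h
      omega
    calc ‖Sg N α‖ ≤ ‖1 - e α‖ * ‖Sg (N/2) (2*α)‖ + 1 := Sg_rec N α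
      _ ≤ ‖1 - e α‖ * (∑ i ∈ Finset.range k, F i (Real.pi * (2*α))) + 1 := by
          gcongr
          exact ih _ _ hN2
      _ = ∑ i ∈ Finset.range (k+1), F i (Real.pi * α) := by
          rw [Finset.sum_range_succ']
          rw [abs_one_sub_e, Finset.mul_sum]
          congr 1
          apply Finset.sum_congr rfl
          intro i _
          rw [F_succ]
          congr 2
          ring

lemma sqrt3_pos : (0:ℝ) < Real.sqrt 3 := Real.sqrt_pos.2 (by norm_num)
lemma sqrt3_sq : Real.sqrt 3 ^ 2 = 3 := Real.sq_sqrt (by norm_num)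
lemma sqrt3_ge : (1.7:ℝ) ≤ Real.sqrt 3 := by
  nlinarith [sqrt3_sq, Real.sqrt_nonneg 3]

lemma F_bound : ∀ i t, F i t ≤ (4/3) * Real.sqrt 3 ^ i := by
  intro i
  induction i using Nat.strong_induction_on with
  | _ i ih =>
    match i with
    | 0 => intro t; simp [F]; norm_num
    | 1 =>
      intro t
      have : F 1 t = 2 * |Real.sin t| := by simp [F]
      rw [this]
      have h1 : |Real.sin t| ≤ 1 := Real.abs_sin_le_one t
      nlinarith [sqrt3_ge]
    | 2 =>
      intro t
      have h : F 2 t = 2*|Real.sin t| * (2*|Real.sin (2*t)|) := by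
        rw [show (2:ℕ) = 1+1 from rfl, F_succ, F_succ]
        simp [F]
      rw [h]
      have h1 : |Real.sin t| ≤ 1 := Real.abs_sin_le_one t
      have h2 : |Real.sin (2*t)| ≤ 1 := Real.abs_sin_le_one (2*t)
      have h3 : (4/3:ℝ) * Real.sqrt 3 ^ 2 = 4 := by rw [sqrt3_sq]; norm_num
      rw [h3]
      nlinarith [abs_nonneg (Real.sin t), abs_nonneg (Real.sin (2*t))]
    | (m+3) =>
      intro t
      have hexp : F (m+3) t = 2*|Real.sin t| * (2*|Real.sin (2*t)|) * F (m+1) (4*t) := by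
        rw [show m+3 = (m+2)+1 from rfl, F_succ, show m+2 = (m+1)+1 from rfl, F_succ]
        rw [show (2:ℝ)*(2*t) = 4*t by ring]
        ring
      have hexp3 : F (m+3) t = 2*|Real.sin t| * (2*|Real.sin (2*t)|) * (2*|Real.sin (4*t)|) * F m (8*t) := by
        rw [hexp, show m+1 = m+1 from rfl, F_succ]
        rw [show (2:ℝ)*(4*t) = 8*t by ring]
        ring
      rcases key_ineq t with hk | hk
      · rw [hexp]
        have ih1 := ih (m+1) (by omega) (4*t)
        calc 2*|Real.sin t| * (2*|Real.sin (2*t)|) * F (m+1) (4*t)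
            ≤ 3 * ((4/3) * Real.sqrt 3 ^ (m+1)) := by
              apply mul_le_mul hk ih1 (F_nonneg _ _) (by norm_num)
          _ = (4/3) * Real.sqrt 3 ^ (m+3) := by
              linear_combination (-(4:ℝ)/3 * Real.sqrt 3^(m+1)) * sqrt3_sq
      · rw [hexp3]
        have ih1 := ih m (by omega) (8*t)
        calc 2*|Real.sin t| * (2*|Real.sin (2*t)|) * (2*|Real.sin (4*t)|) * F m (8*t)
            ≤ (3 * Real.sqrt 3) * ((4/3) * Real.sqrt 3 ^ m) := by
              apply mul_le_mul hk ih1 (F_nonneg _ _)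
              positivity
          _ = (4/3) * Real.sqrt 3 ^ (m+3) := by
              linear_combination (-(4:ℝ)/3 * Real.sqrt 3^(m+1)) * sqrt3_sq

noncomputable abbrev lam : ℝ := Real.log 3 / Real.log 4

lemma log4_pos : (0:ℝ) < Real.log 4 := Real.log_pos (by norm_num)

lemma lam_nonneg : 0 ≤ lam :=
  div_nonneg (Real.log_nonneg (by norm_num)) log4_pos.le

lemma two_rpow_lam : (2:ℝ) ^ lam = Real.sqrt 3 := by
  rw [Real.rpow_def_of_pos (by norm_num : (0:ℝ) < 2)]
  have h4 : Real.log 4 = 2 * Real.log 2 := by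
    rw [show (4:ℝ) = 2^2 by norm_num, Real.log_pow]
    push_cast; ring
  have h2 : Real.log 2 ≠ 0 := by
    have := Real.log_pos (by norm_num : (1:ℝ) < 2); linarith
  have hlam : Real.log 2 * lam = Real.log 3 / 2 := by
    show Real.log 2 * (Real.log 3 / Real.log 4) = _
    rw [h4]; field_simp
  rw [hlam]
  rw [Real.sqrt_eq_rpow, Real.rpow_def_of_pos (by norm_num : (0:ℝ) < 3)]
  ring_nf

lemma four_rpow_lam : (4:ℝ) ^ lam = 3 := by
  rw [Real.rpow_def_of_pos (by norm_num : (0:ℝ) < 4)]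
  have hlam : Real.log 4 * lam = Real.log 3 := by
    show Real.log 4 * (Real.log 3 / Real.log 4) = _
    field_simp
  rw [hlam]
  exact Real.exp_log (by norm_num)

lemma sqrt3_pow_eq (k : ℕ) : Real.sqrt 3 ^ k = ((2:ℝ) ^ k) ^ lam := by
  rw [← two_rpow_lam, ← Real.rpow_natCast ((2:ℝ)^lam) k, ← Real.rpow_natCast (2:ℝ) k,
    ← Real.rpow_mul (by norm_num), ← Real.rpow_mul (by norm_num)]
  ring_nf

lemma geom_bound (k : ℕ) : ∑ i ∈ Finset.range k, (4/3) * Real.sqrt 3 ^ i ≤ 2 * Real.sqrt 3 ^ k := by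
  rw [← Finset.mul_sum]
  have hne : Real.sqrt 3 ≠ 1 := by nlinarith [sqrt3_ge]
  rw [geom_sum_eq hne]
  have h1 : Real.sqrt 3 - 1 ≥ 0.7 := by nlinarith [sqrt3_ge]
  have h2 : (0:ℝ) < Real.sqrt 3 ^ k := pow_pos sqrt3_pos k
  have h3 : (Real.sqrt 3 ^ k - 1)/(Real.sqrt 3 - 1) ≤ 1.5 * Real.sqrt 3 ^ k := by
    rw [div_le_iff₀ (by linarith : (0:ℝ) < Real.sqrt 3 - 1)]
    nlinarith [mul_nonneg (by nlinarith : (0:ℝ) ≤ 1.5*(Real.sqrt 3 - 1) - 1) h2.le]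
  calc (4/3 : ℝ) * ((Real.sqrt 3 ^ k - 1)/(Real.sqrt 3 - 1)) ≤ (4/3) * (1.5 * Real.sqrt 3 ^ k) := by
        apply mul_le_mul_of_nonneg_left h3 (by norm_num)
    _ = 2 * Real.sqrt 3 ^ k := by ring

theorem gelfond_exponential_sum : ∃ C : ℝ, ∀ (α X : ℝ), 2 < X →
    ‖∑ n ∈ Finset.Icc 1 ⌊X⌋₊, (eps n : ℂ) * e (α * n)‖ ≤
      C * X ^ (Real.log 3 / Real.log 4) := by
  refine ⟨7, fun α X hX => ?_⟩
  set N := ⌊X⌋₊ with hN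
  have hX0 : (0:ℝ) < X := by linarith
  have hNX : (N:ℝ) ≤ X := Nat.floor_le hX0.le
  have hXN : X < N + 1 := Nat.lt_floor_add_one X
  -- relate Icc sum to Sg
  have hsplit : Sg (N+1) α = (1 : ℂ) + ∑ n ∈ Finset.Icc 1 N, (eps n : ℂ) * e (α * n) := by
    have hins : Finset.range (N+1) = insert 0 (Finset.Icc 1 N) := by
      ext n
      simp [Nat.lt_succ_iff]
      omega
    unfold Sg
    rw [hins, Finset.sum_insert (by simp)]
    congr 1
    show ((eps 0 : ℂ)) * e (α * (0:ℕ)) = 1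
    have : eps 0 = 1 := by unfold eps; simp
    rw [this]
    push_cast
    simp [e]
  have habs : ‖∑ n ∈ Finset.Icc 1 N, (eps n : ℂ) * e (α * n)‖
      ≤ ‖Sg (N+1) α‖ + 1 := by
    have : (∑ n ∈ Finset.Icc 1 N, (eps n : ℂ) * e (α * n)) = Sg (N+1) α - 1 := by
      rw [hsplit]; ring
    have h2 : Sg (N+1) α - 1 = Sg (N+1) α + (-1) := by ring
    rw [this, h2]
    refine le_trans (norm_add_le _ _) ?_
    simp
  set k := Nat.log 2 (N+1) + 1 with hk
  have hNk : N + 1 < 2^k := Nat.lt_pow_succ_log_self (by norm_num) (N+1)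
  have h2k : (2:ℝ)^k ≤ 2*(N+1) := by
    have h := Nat.pow_log_le_self 2 (show N+1 ≠ 0 by omega)
    have hn : (2:ℕ)^k ≤ 2*(N+1) := by
      calc (2:ℕ)^k = 2 * 2^(Nat.log 2 (N+1)) := by rw [hk, pow_succ]; ring
        _ ≤ 2*(N+1) := Nat.mul_le_mul_left 2 h
    exact_mod_cast hn
  have hbound := Sg_bound k (N+1) α hNk
  have hsum : ∑ i ∈ Finset.range k, F i (Real.pi * α) ≤ 2 * Real.sqrt 3 ^ k := by
    refine le_trans (Finset.sum_le_sum fun i _ => F_bound i (Real.pi * α)) (geom_bound k)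
  -- convert sqrt3^k to X^lam
  have hXlam : Real.sqrt 3 ^ k ≤ 3 * X ^ lam := by
    rw [sqrt3_pow_eq]
    have h1 : ((2:ℝ)^k) ^ lam ≤ (4*X) ^ lam := by
      apply Real.rpow_le_rpow (by positivity) _ lam_nonneg
      calc (2:ℝ)^k ≤ 2*(N+1) := h2k
        _ ≤ 2*(X+1) := by linarith
        _ ≤ 4*X := by linarith
    calc ((2:ℝ)^k) ^ lam ≤ (4*X) ^ lam := h1
      _ = 4 ^ lam * X ^ lam := Real.mul_rpow (by norm_num) hX0.le
      _ = 3 * X ^ lam := by rw [four_rpow_lam]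
  have hXlam1 : (1:ℝ) ≤ X ^ lam := by
    calc (1:ℝ) = 1 ^ lam := (Real.one_rpow _).symm
      _ ≤ X ^ lam := Real.rpow_le_rpow (by norm_num) (by linarith) lam_nonneg
  calc ‖∑ n ∈ Finset.Icc 1 N, (eps n : ℂ) * e (α * n)‖
      ≤ ‖Sg (N+1) α‖ + 1 := habs
    _ ≤ (2 * Real.sqrt 3 ^ k) + 1 := by linarith [le_trans hbound hsum]
    _ ≤ 2 * (3 * X ^ lam) + 1 := by linarith [hXlam]
    _ ≤ 7 * X ^ lam := by linarith [hXlam1]
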